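/- There exists a bijection g : F₂ → F₂ which is an automorphism of the Cayley graph of F₂ with respect to {a, b} (that is, for all x, y ∈ F₂, x⁻¹y ∈ S if and only if g(x)⁻¹g(y) ∈ S, where S = {a, a⁻¹, b, b⁻¹}) such that, writing Λ ≤ Perm(F₂) for the image of the left regular representation of F₂, one has Λ ∩ g⁻¹Λg = {id}. In particular, for all nontrivial x₁, x₂ ∈ F₂ it is not the case that g(x₁·y) = x₂·g(y) for all y ∈ F₂. -/

import Mathlib

/-- `F2` is the free group on two generators. -/
abbrev F2 := FreeGroup (Fin 2)

/-- The first generator `a`. -/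
def a : F2 := FreeGroup.of 0

/-- The second generator `b`. -/
def b : F2 := FreeGroup.of 1

/-- The automorphism `ι` of `F2` determined by `ι a = a⁻¹` and `ι b = b⁻¹`
(given here as the induced group homomorphism, which is in fact an automorphism). -/
def iota : F2 →* F2 := FreeGroup.lift fun i => (FreeGroup.of i)⁻¹

/-- `beginsWith ℓ x` means that the reduced word of `x` is nonempty and its first letter
is the generator `ℓ` or its inverse. -/
def beginsWith (ℓ : Fin 2) (x : F2) : Prop :=
  (FreeGroup.toWord x).head?.map Prod.fst = some ℓ

instance (ℓ : Fin 2) (x : F2) : Decidable (beginsWith ℓ x) := by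
  unfold beginsWith; infer_instance

/-- The map `γ : F2 → F2`: `γ x = x` if the reduced word of `x` begins with `a` or `a⁻¹`,
and `γ x = ι x` otherwise (in particular `γ 1 = 1`). -/
def gamma (x : F2) : F2 := if beginsWith 0 x then x else iota x

namespace CayleyAux
open FreeGroup

variable {α : Type*} [DecidableEq α]

lemma reduce_cons_nil {x : α × Bool} {M : List (α × Bool)} (h : reduce M = []) :
    reduce (x :: M) = [x] := by rw [reduce.cons, h]

lemma reduce_cons_cons {x hd : α × Bool} {M tl : List (α × Bool)} (h : reduce M = hd :: tl) :
    reduce (x :: M) = if x.1 = hd.1 ∧ x.2 = !hd.2 then tl else x :: hd :: tl := by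
  rw [reduce.cons, h]

lemma reduce_cons_self {x : α × Bool} {M : List (α × Bool)}
    (h : reduce (x :: M) = x :: M) : reduce M = M := by
  cases hM : reduce M with
  | nil => rw [reduce_cons_nil hM] at h
           rw [List.cons_eq_cons] at h; exact h.2
  | cons hd tl =>
    rw [reduce_cons_cons hM] at h
    by_cases hc : x.1 = hd.1 ∧ x.2 = !hd.2
    · rw [if_pos hc] at h
      have h1 : tl.length ≤ M.length := by
        have := (reduce.red (L := M)).length_le
        rw [hM] at this; simpa using Nat.le_of_succ_le this
      rw [h] at h1; simp at h1
    · rw [if_neg hc, List.cons_eq_cons] at h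
      exact h.2

lemma nocancel_of_reduced {x hd : α × Bool} {tl : List (α × Bool)}
    (h : reduce (x :: hd :: tl) = x :: hd :: tl) : ¬(x.1 = hd.1 ∧ x.2 = !hd.2) := by
  intro hc
  have hM : reduce (hd :: tl) = hd :: tl := reduce_cons_self h
  rw [reduce_cons_cons hM, if_pos hc] at h
  have : (x :: hd :: tl).length ≤ tl.length := h ▸ le_refl _
  simp at this

lemma reduce_append :
    ∀ (M : List (α × Bool)), reduce M = M → ∀ p,
      reduce (M ++ [p]) = M ++ [p] ∨ reduce (M ++ [p]) = M.dropLast := by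
  intro M
  induction M with
  | nil => intro _ p; left; simp [reduce_singleton]
  | cons x M ih =>
    intro h p
    have hM : reduce M = M := reduce_cons_self h
    have key := ih hM p
    simp only [List.cons_append]
    cases M with
    | nil =>
      simp only [List.nil_append]
      rw [reduce_cons_cons (reduce_singleton p)]
      by_cases hc : x.1 = p.1 ∧ x.2 = !p.2
      · right; simp [hc]
      · left; simp [hc]
    | cons y M' =>
      have hnc : ¬(x.1 = y.1 ∧ x.2 = !y.2) := nocancel_of_reduced h
      simp only [List.cons_append] at key ⊢
      rcases key with hk | hk
      · rw [reduce_cons_cons (hd := y) (tl := M' ++ [p]) hk]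
        left; simp [List.cons_append, hnc]
      · cases M' with
        | nil =>
          simp only [List.dropLast_singleton] at hk
          rw [reduce_cons_nil hk]
          right; simp
        | cons z W =>
          have hdl : (y :: z :: W).dropLast = y :: (z :: W).dropLast := rfl
          rw [hdl] at hk
          rw [reduce_cons_cons (hd := y) (tl := (z :: W).dropLast) hk]
          right
          rw [if_neg hnc]; rfl


/-- flip all the signs in a word -/
def flipWord (L : List (Fin 2 × Bool)) : List (Fin 2 × Bool) := L.map fun p => (p.1, !p.2)

lemma flipWord_flipWord (L : List (Fin 2 × Bool)) : flipWord (flipWord L) = L := by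
  simp [flipWord, Function.comp_def]

lemma reduce_flipWord (L : List (Fin 2 × Bool)) :
    reduce (flipWord L) = flipWord (reduce L) := by
  induction L with
  | nil => rfl
  | cons x L ih =>
    simp only [flipWord, List.map_cons] at ih ⊢
    cases h : reduce L with
    | nil =>
      rw [reduce_cons_nil (M := List.map _ L) (by rw [ih, h]; rfl), reduce_cons_nil h]
      rfl
    | cons y M =>
      rw [reduce_cons_cons (hd := (y.1, !y.2)) (tl := List.map (fun p => (p.1, !p.2)) M)
            (by rw [ih, h]; rfl),
          reduce_cons_cons h]
      by_cases hc : x.1 = y.1 ∧ x.2 = !y.2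
      · rw [if_pos (show (x.1, !x.2).1 = (y.1, !y.2).1 ∧ (x.1, !x.2).2 = !(y.1, !y.2).2 from
            ⟨hc.1, by rw [hc.2, Bool.not_not]⟩), if_pos hc]
      · rw [if_neg (fun hh => hc ⟨hh.1, by simpa using hh.2⟩), if_neg hc]
        rfl

lemma iota_mk (L : List (Fin 2 × Bool)) : iota (mk L) = mk (flipWord L) := by
  induction L with
  | nil => show iota 1 = mk []; rw [_root_.map_one, one_eq_mk]
  | cons x L ih =>
    have h1 : mk (x :: L) = mk [x] * mk L := by rw [mul_mk]; rfl
    have h2 : (mk (flipWord (x :: L)) : F2) = mk [(x.1, !x.2)] * mk (flipWord L) := by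
      rw [mul_mk]; rfl
    rw [h1, _root_.map_mul, ih, h2]
    congr 1
    obtain ⟨i, s⟩ := x
    cases s
    · show iota (FreeGroup.of i)⁻¹ = mk [(i, true)]
      rw [_root_.map_inv]
      show (FreeGroup.lift _ (FreeGroup.of i))⁻¹ = _
      rw [FreeGroup.lift_apply_of, inv_inv]; rfl
    · show iota (FreeGroup.of i) = mk [(i, false)]
      show FreeGroup.lift _ (FreeGroup.of i) = _
      rw [FreeGroup.lift_apply_of]
      rw [show (FreeGroup.of i : F2) = mk [(i, true)] from rfl, inv_mk]; rfl

lemma toWord_iota (x : F2) : (iota x).toWord = flipWord x.toWord := by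
  conv_lhs => rw [← mk_toWord (x := x)]
  rw [iota_mk, toWord_mk, reduce_flipWord, reduce_toWord]

lemma iota_iota (x : F2) : iota (iota x) = x :=
  toWord_injective (by rw [toWord_iota, toWord_iota, flipWord_flipWord])

lemma beginsWith_iota (ℓ : Fin 2) (x : F2) : beginsWith ℓ (iota x) ↔ beginsWith ℓ x := by
  unfold beginsWith
  rw [toWord_iota]
  cases x.toWord with
  | nil => rfl
  | cons y M => simp [flipWord]

lemma iota_eq_self {x : F2} (h : iota x = x) : x = 1 := by
  have := congrArg toWord h
  rw [toWord_iota] at this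
  cases hx : x.toWord with
  | nil => exact toWord_eq_nil_iff.mp hx
  | cons y M =>
    rw [hx] at this
    have := (List.cons_eq_cons.mp this).1
    obtain ⟨i, s⟩ := y
    simp [flipWord] at this

end CayleyAux

namespace CayleyAux
open FreeGroup

/-- multiplying on the right by a single letter does not change the first letter,
provided neither word is trivial. -/
lemma head_mul_single {x : F2} (q : Fin 2 × Bool) (hx : x ≠ 1)
    (hxy : x * mk [q] ≠ 1) :
    (toWord (x * mk [q])).head?.map Prod.fst = (toWord x).head?.map Prod.fst := by
  have hmul : x * mk [q] = mk (x.toWord ++ [q]) := by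
    conv_lhs => rw [← mk_toWord (x := x)]
    rw [mul_mk]
  rw [hmul, toWord_mk]
  rcases reduce_append x.toWord (reduce_toWord x) q with h | h
  · rw [h]
    cases hw : x.toWord with
    | nil => exact absurd (toWord_eq_nil_iff.mp hw) hx
    | cons c T => rfl
  · rw [h]
    cases hw : x.toWord with
    | nil => exact absurd (toWord_eq_nil_iff.mp hw) hx
    | cons c T =>
      cases T with
      | nil =>
        exfalso
        apply hxy
        rw [hmul, ← toWord_eq_nil_iff, toWord_mk, h, hw]
        rfl
      | cons d T' => rfl

lemma beginsWith_one (ℓ : Fin 2) : ¬ beginsWith ℓ 1 := by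
  unfold beginsWith
  rw [toWord_one]
  simp

lemma gamma_one : gamma 1 = 1 := by
  unfold gamma
  rw [if_neg (beginsWith_one 0), _root_.map_one]

lemma gamma_gamma (x : F2) : gamma (gamma x) = x := by
  unfold gamma
  by_cases h : beginsWith 0 x
  · rw [if_pos h, if_pos h]
  · rw [if_neg h, if_neg (fun hh => h ((beginsWith_iota 0 x).mp hh)), iota_iota]

lemma gamma_involutive : Function.Involutive gamma := gamma_gamma

/-- `gamma` as a permutation. -/
def g : Equiv.Perm F2 := gamma_involutive.toPerm

lemma g_apply (x : F2) : g x = gamma x := rfl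

end CayleyAux

namespace CayleyAux
open FreeGroup

lemma mem_S_iff {s : F2} :
    s ∈ ({a, a⁻¹, b, b⁻¹} : Set F2) ↔ s = a ∨ s = a⁻¹ ∨ s = b ∨ s = b⁻¹ := by
  simp [Set.mem_insert_iff]

lemma S_single {s : F2} (hs : s ∈ ({a, a⁻¹, b, b⁻¹} : Set F2)) :
    ∃ q : Fin 2 × Bool, s = mk [q] := by
  rcases mem_S_iff.mp hs with rfl | rfl | rfl | rfl
  · exact ⟨(0, true), rfl⟩
  · exact ⟨(0, false), by rw [show a = mk [(0, true)] from rfl, inv_mk]; rfl⟩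
  · exact ⟨(1, true), rfl⟩
  · exact ⟨(1, false), by rw [show b = mk [(1, true)] from rfl, inv_mk]; rfl⟩

lemma iota_a : iota a = a⁻¹ := FreeGroup.lift_apply_of
lemma iota_b : iota b = b⁻¹ := FreeGroup.lift_apply_of

lemma iota_S {s : F2} (hs : s ∈ ({a, a⁻¹, b, b⁻¹} : Set F2)) :
    iota s ∈ ({a, a⁻¹, b, b⁻¹} : Set F2) := by
  rcases mem_S_iff.mp hs with rfl | rfl | rfl | rfl <;>
    rw [mem_S_iff] <;>
    simp [iota_a, iota_b, _root_.map_inv]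

lemma beginsWith_eq {x y : F2} (hx : x ≠ 1) (hy : y ≠ 1)
    (hs : x⁻¹ * y ∈ ({a, a⁻¹, b, b⁻¹} : Set F2)) :
    (beginsWith 0 x ↔ beginsWith 0 y) := by
  obtain ⟨q, hq⟩ := S_single hs
  have hxy : y = x * mk [q] := by rw [← hq]; group
  have := head_mul_single q hx (hxy ▸ hy)
  rw [← hxy] at this
  unfold beginsWith
  rw [this]

lemma edge_forward {x y : F2} (hs : x⁻¹ * y ∈ ({a, a⁻¹, b, b⁻¹} : Set F2)) :
    (gamma x)⁻¹ * gamma y ∈ ({a, a⁻¹, b, b⁻¹} : Set F2) := by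
  by_cases hx0 : beginsWith 0 x <;> by_cases hy0 : beginsWith 0 y
  · unfold gamma; rw [if_pos hx0, if_pos hy0]; exact hs
  · have hx1 : x ≠ 1 := fun h => beginsWith_one 0 (h ▸ hx0)
    have hy1 : y = 1 := by
      by_contra hy1
      exact hy0 ((beginsWith_eq hx1 hy1 hs).mp hx0)
    subst hy1
    unfold gamma
    rw [if_pos hx0, if_neg hy0, _root_.map_one, mul_one]
    rwa [mul_one] at hs
  · have hy1 : y ≠ 1 := fun h => beginsWith_one 0 (h ▸ hy0)
    have hx1 : x = 1 := by
      by_contra hx1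
      exact hx0 ((beginsWith_eq hx1 hy1 hs).mpr hy0)
    subst hx1
    unfold gamma
    rw [if_neg hx0, if_pos hy0, _root_.map_one]
    rwa [inv_one, one_mul] at hs ⊢
  · unfold gamma
    rw [if_neg hx0, if_neg hy0, ← _root_.map_inv, ← _root_.map_mul]
    exact iota_S hs

lemma gamma_a : gamma a = a := if_pos (by decide)
lemma gamma_b : gamma b = b⁻¹ := by
  unfold gamma; rw [if_neg (by decide), iota_b]

lemma gamma_cases (z : F2) : gamma z = z ∨ gamma z = iota z := by
  unfold gamma; split
  · exact Or.inl rfl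
  · exact Or.inr rfl

lemma kernel {x₁ x₂ : F2} (H : ∀ y : F2, gamma (x₁ * y) = x₂ * gamma y) : x₁ = 1 := by
  have h1 : x₂ = gamma x₁ := by
    have := H 1; rwa [mul_one, gamma_one, mul_one, eq_comm] at this
  have Ha := H (x₁⁻¹ * a)
  rw [mul_inv_cancel_left, gamma_a] at Ha
  have Hb := H (x₁⁻¹ * b)
  rw [mul_inv_cancel_left, gamma_b] at Hb
  rcases gamma_cases x₁ with hg | hg
  · -- x₂ = x₁; use the b equation
    have h2 : x₂ = x₁ := h1.trans hg
    subst h2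
    rcases gamma_cases (x₂⁻¹ * b) with hc | hc
    · rw [hc, mul_inv_cancel_left] at Hb
      exact absurd Hb (by decide)
    · rw [hc, _root_.map_mul, _root_.map_inv, iota_b, ← mul_assoc] at Hb
      have e : x₂ * (iota x₂)⁻¹ = 1 := right_eq_mul.mp Hb
      exact iota_eq_self (mul_inv_eq_one.mp e).symm
  · -- x₂ = iota x₁; use the a equation
    have h2 : x₂ = iota x₁ := h1.trans hg
    rcases gamma_cases (x₁⁻¹ * a) with hc | hc
    · rw [hc, h2, ← mul_assoc] at Ha
      have e : iota x₁ * x₁⁻¹ = 1 := right_eq_mul.mp Ha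
      exact iota_eq_self (mul_inv_eq_one.mp e)
    · rw [hc, _root_.map_mul, _root_.map_inv, iota_a, h2, mul_inv_cancel_left] at Ha
      exact absurd Ha (by decide)

end CayleyAux

/-- There is an automorphism `g` of the Cayley graph of `F₂` with respect to `{a, b}` such
that, writing `Λ ≤ Perm F₂` for the image of the left regular representation, one has
`Λ ∩ g⁻¹ Λ g = {id}`; in particular for nontrivial `x₁, x₂` it is not the case that
`g (x₁ * y) = x₂ * g y` for all `y`. -/
theorem exists_cayley_automorphism_conj_trivial :
    ∃ g : Equiv.Perm F2,
      (∀ x y : F2, x⁻¹ * y ∈ ({a, a⁻¹, b, b⁻¹} : Set F2) ↔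
        (g x)⁻¹ * g y ∈ ({a, a⁻¹, b, b⁻¹} : Set F2)) ∧
      (MulAction.toPermHom F2 F2).range ⊓
        Subgroup.map (MulAut.conj g⁻¹).toMonoidHom (MulAction.toPermHom F2 F2).range = ⊥ ∧
      (∀ x₁ x₂ : F2, x₁ ≠ 1 → x₂ ≠ 1 → ¬ (∀ y : F2, g (x₁ * y) = x₂ * g y)) := by
  refine ⟨CayleyAux.g, ?_, ?_, ?_⟩
  · intro x y
    constructor
    · exact CayleyAux.edge_forward
    · intro h
      have h2 := CayleyAux.edge_forward (x := CayleyAux.g x) (y := CayleyAux.g y) h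
      rw [CayleyAux.g_apply, CayleyAux.g_apply] at h2
      rwa [CayleyAux.gamma_gamma, CayleyAux.gamma_gamma] at h2
  · rw [eq_bot_iff]
    intro p hp
    rw [Subgroup.mem_inf] at hp
    obtain ⟨hp1, hp2⟩ := hp
    obtain ⟨x₁, h1⟩ := MonoidHom.mem_range.mp hp1
    obtain ⟨q, hq, h3⟩ := Subgroup.mem_map.mp hp2
    obtain ⟨x₂, h2⟩ := MonoidHom.mem_range.mp hq
    have key : ∀ y : F2, gamma (x₁ * y) = x₂ * gamma y := by
      intro y
      have e1 : p y = x₁ * y := by rw [← h1]; rfl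
      have e2 : p y = (CayleyAux.g)⁻¹ (x₂ * CayleyAux.g y) := by
        rw [← h3, ← h2]; rfl
      have e3 : CayleyAux.g (x₁ * y) = x₂ * CayleyAux.g y := by
        rw [← e1, e2, ← Equiv.Perm.mul_apply, mul_inv_cancel, Equiv.Perm.one_apply]
      exact e3
    have hx1 : x₁ = 1 := CayleyAux.kernel key
    rw [Subgroup.mem_bot, ← h1, hx1, map_one]
  · intro x₁ x₂ hx1 _ H
    exact hx1 (CayleyAux.kernel fun y => H y)
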